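/- Let ṽ : ℝ³ → ℝ² and θ : ℝ³ → ℝ be smooth and 1-periodic in the horizontal variables, let α ∈ ℝ, and suppose θ satisfies the boundary conditions ∂₃θ(x_H,−h) = 0 and ∂₃θ(x_H,0) + α θ(x_H,0) = 0 for every x_H. Then ∫_𝒪 ‖ṽ‖² θ Δθ dx = − α ∫_{𝕋²} ‖ṽ(x_H,0)‖² |θ(x_H,0)|² dx_H − ∫_𝒪 ‖ṽ‖² |∇θ|² dx − 2 ∑_{i=1}^{2} ∑_{j=1}^{3} ∫_𝒪 θ · ṽⁱ · (∂ⱼṽⁱ) · (∂ⱼθ) dx, where Δ = ∂₁² + ∂₂² + ∂₃², ‖·‖ is the Euclidean norm on ℝ², and |∇θ|² = ∑_{j=1}^{3} |∂ⱼθ|². -/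

import Mathlib

open MeasureTheory Real

noncomputable section

/-- Partial derivative of `f` in the `j`-th coordinate direction. -/
def pd (j : Fin 3) (f : (Fin 3 → ℝ) → ℝ) (x : Fin 3 → ℝ) : ℝ :=
  fderiv ℝ f x (Pi.single j 1)

/-- `f` is 1-periodic in the two horizontal variables. -/
def HorizPeriodic (f : (Fin 3 → ℝ) → ℝ) : Prop :=
  ∀ x : Fin 3 → ℝ, f (x + Pi.single 0 1) = f x ∧ f (x + Pi.single 1 1) = f x

/-- The fundamental domain `[0,1] × [0,1] × [-h,0]` of `𝒪 = 𝕋² × (-h,0)`. -/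
def Box (h : ℝ) : Set (Fin 3 → ℝ) := Set.Icc ![0, 0, -h] ![1, 1, 0]

/-- Horizontal divergence `div_H v = ∂₁ v¹ + ∂₂ v²`. -/
def divH (v : Fin 2 → (Fin 3 → ℝ) → ℝ) (x : Fin 3 → ℝ) : ℝ :=
  pd 0 (v 0) x + pd 1 (v 1) x

/-- Horizontal advection `(v · ∇_H) g = v¹ ∂₁ g + v² ∂₂ g`. -/
def advH (v : Fin 2 → (Fin 3 → ℝ) → ℝ) (g : (Fin 3 → ℝ) → ℝ) (x : Fin 3 → ℝ) : ℝ :=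
  v 0 x * pd 0 g x + v 1 x * pd 1 g x

/-- Advection `(u · ∇) g` by the full velocity field `u = (v, w)`. -/
def adv3 (v : Fin 2 → (Fin 3 → ℝ) → ℝ) (w g : (Fin 3 → ℝ) → ℝ) (x : Fin 3 → ℝ) : ℝ :=
  v 0 x * pd 0 g x + v 1 x * pd 1 g x + w x * pd 2 g x

/-- Vertical velocity `w(v)(x) = -∫_{-h}^{x₃} div_H v (x_H, ζ) dζ`. -/
def wv (h : ℝ) (v : Fin 2 → (Fin 3 → ℝ) → ℝ) (x : Fin 3 → ℝ) : ℝ :=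
  -(∫ ζ in (-h)..(x 2), divH v (Function.update x 2 ζ))

/-- Vertical primitive `Θ(x) = ∫_{-h}^{x₃} θ(x_H, ζ) dζ`. -/
def vint (h : ℝ) (θ : (Fin 3 → ℝ) → ℝ) (x : Fin 3 → ℝ) : ℝ :=
  ∫ ζ in (-h)..(x 2), θ (Function.update x 2 ζ)


lemma pd_contDiff {f} (hf : ContDiff ℝ (⊤:ℕ∞) f) (j : Fin 3) : ContDiff ℝ (⊤:ℕ∞) (pd j f) :=
  (hf.fderiv_right (by exact_mod_cast le_top)).clm_apply contDiff_const

lemma cd_diff {f : (Fin 3 → ℝ) → ℝ} (hf : ContDiff ℝ (⊤:ℕ∞) f) : Differentiable ℝ f :=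
  hf.differentiable (by simp)

lemma fderiv_shift {f : (Fin 3 → ℝ) → ℝ} (hf : Differentiable ℝ f) (c : Fin 3 → ℝ)
    (hper : ∀ x, f (x + c) = f x) (x : Fin 3 → ℝ) :
    fderiv ℝ f (x + c) = fderiv ℝ f x := by
  have h1 : HasFDerivAt (fun y : Fin 3 → ℝ => y + c) (ContinuousLinearMap.id ℝ _) x :=
    (hasFDerivAt_id x).add_const c
  have h2 : HasFDerivAt (fun y => f (y + c)) ((fderiv ℝ f (x + c)).comp
      (ContinuousLinearMap.id ℝ _)) x := ((hf (x + c)).hasFDerivAt).comp x h1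
  have h3 : (fun y => f (y + c)) = f := funext hper
  rw [h3] at h2
  simpa using h2.fderiv.symm

lemma pd_per {f} (hf : ContDiff ℝ (⊤:ℕ∞) f) (hper : HorizPeriodic f) (j : Fin 3) :
    HorizPeriodic (pd j f) := by
  intro x
  refine ⟨?_, ?_⟩
  · show fderiv ℝ f (x + Pi.single 0 1) (Pi.single j 1) = fderiv ℝ f x (Pi.single j 1)
    rw [fderiv_shift (cd_diff hf) _ (fun y => (hper y).1) x]
  · show fderiv ℝ f (x + Pi.single 1 1) (Pi.single j 1) = fderiv ℝ f x (Pi.single j 1)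
    rw [fderiv_shift (cd_diff hf) _ (fun y => (hper y).2) x]

lemma pd_mul (j : Fin 3) {f g : (Fin 3 → ℝ) → ℝ} {x} (hf : DifferentiableAt ℝ f x)
    (hg : DifferentiableAt ℝ g x) :
    pd j (fun y => f y * g y) x = pd j f x * g x + f x * pd j g x := by
  unfold pd
  rw [fderiv_fun_mul hf hg]
  simp
  ring

lemma pd_sum (j : Fin 3) {f : Fin 2 → (Fin 3 → ℝ) → ℝ} {x}
    (hf : ∀ i, DifferentiableAt ℝ (f i) x) :
    pd j (fun y => ∑ i, f i y) x = ∑ i, pd j (f i) x := by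
  unfold pd
  rw [fderiv_fun_sum (fun i _ => hf i)]
  simp

lemma HorizPeriodic.mul {f g} (hf : HorizPeriodic f) (hg : HorizPeriodic g) :
    HorizPeriodic (fun x => f x * g x) := by
  intro x
  constructor
  · show f (x + Pi.single 0 1) * g (x + Pi.single 0 1) = f x * g x
    rw [(hf x).1, (hg x).1]
  · show f (x + Pi.single 1 1) * g (x + Pi.single 1 1) = f x * g x
    rw [(hf x).2, (hg x).2]

lemma insertNth_add_single (i : Fin 3) (c d : ℝ) (y : Fin 2 → ℝ) :
    (Fin.insertNth i c y : Fin 3 → ℝ) + Pi.single i d = (Fin.insertNth i (c + d) y : Fin 3 → ℝ) := by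
  ext j
  rcases eq_or_ne j i with rfl | hj
  · simp
  · obtain ⟨k, rfl⟩ := Fin.exists_succAbove_eq hj
    simp [Pi.single_eq_of_ne (Fin.succAbove_ne i k)]

lemma insertNth_two (c : ℝ) (y : Fin 2 → ℝ) : Fin.insertNth (2:Fin 3) c y = ![y 0, y 1, c] := by
  have : (2:Fin 3) = Fin.last 2 := rfl
  rw [this, Fin.insertNth_last']
  ext j
  fin_cases j <;> simp [Fin.snoc] <;> (try rfl)

/-- Components of the vector field used in the divergence theorem. -/
def Gfun (vt : Fin 2 → (Fin 3 → ℝ) → ℝ) (θ : (Fin 3 → ℝ) → ℝ) (j : Fin 3) (x : Fin 3 → ℝ) : ℝ :=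
  (∑ i, vt i x ^ 2) * θ x * pd j θ x

section aux
variable {vt : Fin 2 → (Fin 3 → ℝ) → ℝ} {θ : (Fin 3 → ℝ) → ℝ}

lemma Fsq_contDiff (hvt : ∀ i, ContDiff ℝ (⊤:ℕ∞) (vt i)) :
    ContDiff ℝ (⊤:ℕ∞) (fun x => ∑ i, vt i x ^ 2) :=
  ContDiff.sum (fun i _ => (hvt i).pow 2)

lemma Gfun_contDiff (hvt : ∀ i, ContDiff ℝ (⊤:ℕ∞) (vt i)) (hθ : ContDiff ℝ (⊤:ℕ∞) θ) (j : Fin 3) :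
    ContDiff ℝ (⊤:ℕ∞) (Gfun vt θ j) :=
  ((Fsq_contDiff hvt).mul hθ).mul (pd_contDiff hθ j)

lemma Fsq_per (hvt : ∀ i, HorizPeriodic (vt i)) :
    HorizPeriodic (fun x => ∑ i, vt i x ^ 2) := by
  intro x
  constructor
  · show (∑ i, vt i (x + Pi.single 0 1) ^ 2) = ∑ i, vt i x ^ 2
    exact Finset.sum_congr rfl fun i _ => by rw [(hvt i x).1]
  · show (∑ i, vt i (x + Pi.single 1 1) ^ 2) = ∑ i, vt i x ^ 2
    exact Finset.sum_congr rfl fun i _ => by rw [(hvt i x).2]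

lemma Gfun_per (hvt : ∀ i, ContDiff ℝ (⊤:ℕ∞) (vt i)) (hvtp : ∀ i, HorizPeriodic (vt i))
    (hθ : ContDiff ℝ (⊤:ℕ∞) θ) (hθp : HorizPeriodic θ) (j : Fin 3) :
    HorizPeriodic (Gfun vt θ j) :=
  ((Fsq_per hvtp).mul hθp).mul (pd_per hθ hθp j)

/-- Pointwise divergence identity. -/
lemma div_identity (hvt : ∀ i, ContDiff ℝ (⊤:ℕ∞) (vt i)) (hθ : ContDiff ℝ (⊤:ℕ∞) θ)
    (x : Fin 3 → ℝ) :
    (∑ j, pd j (Gfun vt θ j) x)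
      = (∑ i, vt i x ^ 2) * θ x * (∑ j, pd j (pd j θ) x)
        + (∑ i, vt i x ^ 2) * (∑ j, (pd j θ x) ^ 2)
        + ∑ j, ∑ i, 2 * (θ x * vt i x * pd j (vt i) x * pd j θ x) := by
  have hF := Fsq_contDiff hvt
  have hFθ : DifferentiableAt ℝ (fun y => (∑ i, vt i y ^ 2) * θ y) x :=
    ((cd_diff hF) x).mul ((cd_diff hθ) x)
  have e2 : ∀ j : Fin 3, pd j (fun y => ∑ i, vt i y ^ 2) x
      = ∑ i, 2 * vt i x * pd j (vt i) x := by
    intro j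
    rw [pd_sum j (fun i => (((hvt i).pow 2).differentiable (by simp)) x)]
    refine Finset.sum_congr rfl fun i _ => ?_
    have hsq : (fun y => vt i y ^ 2) = fun y => vt i y * vt i y := by funext y; ring
    rw [hsq, pd_mul j ((cd_diff (hvt i)) x) ((cd_diff (hvt i)) x)]
    ring
  have e1 : ∀ j : Fin 3, pd j (Gfun vt θ j) x
      = ((∑ i, 2 * vt i x * pd j (vt i) x) * θ x + (∑ i, vt i x ^ 2) * pd j θ x) * pd j θ x
        + (∑ i, vt i x ^ 2) * θ x * pd j (pd j θ) x := by
    intro j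
    show pd j (fun y => ((fun z => (∑ i, vt i z ^ 2) * θ z) y) * pd j θ y) x = _
    rw [pd_mul j hFθ ((cd_diff (pd_contDiff hθ j)) x),
      pd_mul j ((cd_diff hF) x) ((cd_diff hθ) x), e2 j]
  simp only [e1, Fin.sum_univ_three, Fin.sum_univ_two]
  ring

end aux

/-- integration by parts for `∫ ‖ṽ‖² θ Δθ` under the Robin boundary
condition at the top and the Neumann condition at the bottom. -/
theorem statement6
    (h : ℝ) (hh : 0 < h)
    (vt : Fin 2 → (Fin 3 → ℝ) → ℝ)
    (hvt_smooth : ∀ i, ContDiff ℝ (⊤ : ℕ∞) (vt i))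
    (hvt_per : ∀ i, HorizPeriodic (vt i))
    (θ : (Fin 3 → ℝ) → ℝ)
    (hθ_smooth : ContDiff ℝ (⊤ : ℕ∞) θ) (hθ_per : HorizPeriodic θ)
    (α : ℝ)
    (hbc_bot : ∀ a b : ℝ, pd 2 θ ![a, b, -h] = 0)
    (hbc_top : ∀ a b : ℝ, pd 2 θ ![a, b, 0] + α * θ ![a, b, 0] = 0) :
    (∫ x in Box h, (∑ i, vt i x ^ 2) * θ x * (∑ j, pd j (pd j θ) x))
      = -α * (∫ y in Set.Icc (![0, 0] : Fin 2 → ℝ) ![1, 1],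
              (∑ i, vt i ![y 0, y 1, 0] ^ 2) * (θ ![y 0, y 1, 0]) ^ 2)
        - (∫ x in Box h, (∑ i, vt i x ^ 2) * (∑ j, (pd j θ x) ^ 2))
        - 2 * ∑ i : Fin 2, ∑ j : Fin 3,
            ∫ x in Box h, θ x * vt i x * pd j (vt i) x * pd j θ x := by
  set a : Fin 3 → ℝ := ![0, 0, -h] with ha
  set b : Fin 3 → ℝ := ![1, 1, 0] with hb
  have hle : a ≤ b := by
    intro i
    fin_cases i <;> simp [ha, hb] <;> linarith
  have hBox : Box h = Set.Icc a b := rfl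
  -- continuity facts
  have hGc : ∀ j, Continuous (Gfun vt θ j) :=
    fun j => (Gfun_contDiff hvt_smooth hθ_smooth j).continuous
  have hdivc : Continuous (fun x => ∑ j, pd j (Gfun vt θ j) x) :=
    continuous_finset_sum _ (fun j _ =>
      (pd_contDiff (Gfun_contDiff hvt_smooth hθ_smooth j) j).continuous)
  -- divergence theorem
  have hthm := integral_divergence_of_hasFDerivAt_off_countable' (a := a) (b := b) hle
    (Gfun vt θ) (fun j x => fderiv ℝ (Gfun vt θ j) x) ∅ Set.countable_empty
    (fun j => (hGc j).continuousOn)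
    (fun x _ j => ((cd_diff (Gfun_contDiff hvt_smooth hθ_smooth j)) x).hasFDerivAt)
    (by
      have : (fun x => ∑ j : Fin 3, fderiv ℝ (Gfun vt θ j) x (Pi.single j 1))
          = fun x => ∑ j, pd j (Gfun vt θ j) x := rfl
      rw [this]
      exact hdivc.continuousOn.integrableOn_compact isCompact_Icc)
  rw [Fin.sum_univ_three] at hthm
  -- horizontal faces cancel by periodicity
  have hGper := Gfun_per hvt_smooth hvt_per hθ_smooth hθ_per
  have hbd0 : (∫ x in Set.Icc (a ∘ Fin.succAbove 0) (b ∘ Fin.succAbove 0),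
        Gfun vt θ 0 (Fin.insertNth 0 (b 0) x))
      = ∫ x in Set.Icc (a ∘ Fin.succAbove 0) (b ∘ Fin.succAbove 0),
        Gfun vt θ 0 (Fin.insertNth 0 (a 0) x) := by
    refine setIntegral_congr_fun measurableSet_Icc (fun y _ => ?_)
    have hb0 : b 0 = 1 := rfl
    have ha0 : a 0 = 0 := rfl
    rw [hb0, ha0, show (1:ℝ) = 0 + 1 from (zero_add 1).symm, ← insertNth_add_single]
    exact (hGper 0 _).1
  have hbd1 : (∫ x in Set.Icc (a ∘ Fin.succAbove 1) (b ∘ Fin.succAbove 1),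
        Gfun vt θ 1 (Fin.insertNth 1 (b 1) x))
      = ∫ x in Set.Icc (a ∘ Fin.succAbove 1) (b ∘ Fin.succAbove 1),
        Gfun vt θ 1 (Fin.insertNth 1 (a 1) x) := by
    refine setIntegral_congr_fun measurableSet_Icc (fun y _ => ?_)
    have hb1 : b 1 = 1 := rfl
    have ha1 : a 1 = 0 := rfl
    rw [hb1, ha1, show (1:ℝ) = 0 + 1 from (zero_add 1).symm, ← insertNth_add_single]
    exact (hGper 1 _).2
  -- top/bottom faces
  have hfa : a ∘ Fin.succAbove 2 = ![(0:ℝ), 0] := by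
    ext k; fin_cases k <;> rfl
  have hfb : b ∘ Fin.succAbove 2 = ![(1:ℝ), 1] := by
    ext k; fin_cases k <;> rfl
  have hfront2 : (∫ x in Set.Icc (a ∘ Fin.succAbove 2) (b ∘ Fin.succAbove 2),
        Gfun vt θ 2 (Fin.insertNth 2 (b 2) x))
      = -α * (∫ y in Set.Icc (![0, 0] : Fin 2 → ℝ) ![1, 1],
              (∑ i, vt i ![y 0, y 1, 0] ^ 2) * (θ ![y 0, y 1, 0]) ^ 2) := by
    rw [hfa, hfb]
    have hpt : ∀ y : Fin 2 → ℝ, Gfun vt θ 2 (Fin.insertNth 2 (b 2) y)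
        = -α * ((∑ i, vt i ![y 0, y 1, 0] ^ 2) * (θ ![y 0, y 1, 0]) ^ 2) := by
      intro y
      have hb2 : b 2 = 0 := rfl
      have htop := hbc_top (y 0) (y 1)
      have hpd : pd 2 θ ![y 0, y 1, 0] = -(α * θ ![y 0, y 1, 0]) := by linarith
      rw [hb2, insertNth_two]
      unfold Gfun
      rw [hpd]
      ring
    rw [setIntegral_congr_fun measurableSet_Icc (fun y _ => hpt y), integral_const_mul]
  have hback2 : (∫ x in Set.Icc (a ∘ Fin.succAbove 2) (b ∘ Fin.succAbove 2),
        Gfun vt θ 2 (Fin.insertNth 2 (a 2) x)) = 0 := by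
    have hpt : ∀ y : Fin 2 → ℝ, Gfun vt θ 2 (Fin.insertNth 2 (a 2) y) = 0 := by
      intro y
      have ha2 : a 2 = -h := rfl
      rw [ha2, insertNth_two]
      unfold Gfun
      rw [hbc_bot (y 0) (y 1)]
      ring
    rw [setIntegral_congr_fun measurableSet_Icc (fun y _ => hpt y), integral_zero]
  rw [hbd0, hbd1, hfront2, hback2, sub_self, sub_self, sub_zero, zero_add, zero_add] at hthm
  -- now hthm : ∫ divergence = -α * bdry integral
  have key : (∫ x in Set.Icc a b, ∑ j, pd j (Gfun vt θ j) x)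
      = -α * (∫ y in Set.Icc (![0, 0] : Fin 2 → ℝ) ![1, 1],
              (∑ i, vt i ![y 0, y 1, 0] ^ 2) * (θ ![y 0, y 1, 0]) ^ 2) := by
    rw [← hthm]
    refine setIntegral_congr_fun measurableSet_Icc (fun x _ => ?_)
    show ∑ j : Fin 3, pd j (Gfun vt θ j) x
      = ∑ j : Fin 3, (fderiv ℝ (Gfun vt θ j) x) (Pi.single j 1)
    rfl
  -- continuity of the pieces
  have hFc : Continuous fun x => ∑ i, vt i x ^ 2 := (Fsq_contDiff hvt_smooth).continuous
  have hθc := hθ_smooth.continuous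
  have hAc : Continuous (fun x => (∑ i, vt i x ^ 2) * θ x * (∑ j, pd j (pd j θ) x)) :=
    (hFc.mul hθc).mul (continuous_finset_sum _ fun j _ =>
      (pd_contDiff (pd_contDiff hθ_smooth j) j).continuous)
  have hBc : Continuous (fun x => (∑ i, vt i x ^ 2) * (∑ j, (pd j θ x) ^ 2)) :=
    hFc.mul (continuous_finset_sum _ fun j _ => ((pd_contDiff hθ_smooth j).continuous).pow 2)
  have hCc : ∀ (i : Fin 2) (j : Fin 3),
      Continuous (fun x => θ x * vt i x * pd j (vt i) x * pd j θ x) := fun i j =>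
    ((hθc.mul ((hvt_smooth i).continuous)).mul
      (pd_contDiff (hvt_smooth i) j).continuous).mul (pd_contDiff hθ_smooth j).continuous
  have hCj : ∀ j : Fin 3,
      Continuous (fun x => ∑ i, 2 * (θ x * vt i x * pd j (vt i) x * pd j θ x)) := fun j =>
    continuous_finset_sum _ fun i _ => continuous_const.mul (hCc i j)
  have hCsum : Continuous (fun x => ∑ j, ∑ i, 2 * (θ x * vt i x * pd j (vt i) x * pd j θ x)) :=
    continuous_finset_sum _ fun j _ => hCj j
  have intOn : ∀ {f : (Fin 3 → ℝ) → ℝ}, Continuous f → IntegrableOn f (Set.Icc a b) :=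
    fun hf => hf.continuousOn.integrableOn_compact isCompact_Icc
  have split : (∫ x in Set.Icc a b, ∑ j, pd j (Gfun vt θ j) x)
      = (∫ x in Set.Icc a b, (∑ i, vt i x ^ 2) * θ x * (∑ j, pd j (pd j θ) x))
        + (∫ x in Set.Icc a b, (∑ i, vt i x ^ 2) * (∑ j, (pd j θ x) ^ 2))
        + 2 * ∑ i : Fin 2, ∑ j : Fin 3,
            ∫ x in Set.Icc a b, θ x * vt i x * pd j (vt i) x * pd j θ x := by
    have h1 : (∫ x in Set.Icc a b, ∑ j, pd j (Gfun vt θ j) x)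
        = ∫ x in Set.Icc a b, ((∑ i, vt i x ^ 2) * θ x * (∑ j, pd j (pd j θ) x)
            + (∑ i, vt i x ^ 2) * (∑ j, (pd j θ x) ^ 2)
            + ∑ j, ∑ i, 2 * (θ x * vt i x * pd j (vt i) x * pd j θ x)) :=
      setIntegral_congr_fun measurableSet_Icc (fun x _ => div_identity hvt_smooth hθ_smooth x)
    rw [h1, integral_add (intOn (f := fun x => (∑ i, vt i x ^ 2) * θ x * (∑ j, pd j (pd j θ) x)
        + (∑ i, vt i x ^ 2) * (∑ j, (pd j θ x) ^ 2)) (hAc.add hBc)) (intOn hCsum),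
      integral_add (intOn hAc) (intOn hBc)]
    congr 1
    rw [integral_finset_sum _ (fun j _ => intOn (hCj j))]
    have h2 : ∀ j : Fin 3,
        (∫ x in Set.Icc a b, ∑ i, 2 * (θ x * vt i x * pd j (vt i) x * pd j θ x))
        = ∑ i, 2 * ∫ x in Set.Icc a b, θ x * vt i x * pd j (vt i) x * pd j θ x := by
      intro j
      rw [integral_finset_sum _ (fun i _ => intOn (f := fun x => 2 * (θ x * vt i x * pd j (vt i) x * pd j θ x))
        (continuous_const.mul (hCc i j)))]
      exact Finset.sum_congr rfl fun i _ => integral_const_mul 2 _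
    simp only [h2]
    rw [Finset.sum_comm, Finset.mul_sum]
    refine Finset.sum_congr rfl fun i _ => ?_
    rw [Finset.mul_sum]
  rw [split] at key
  rw [hBox]
  linarith
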